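/- Let d ≥ 1, M ≥ 1 and J ∈ ℕ. Let w_1,…,w_J ∈ ℝ^d be vectors such that for every subset T ⊆ {1,…,J} of cardinality d the family (w_j)_{j∈T} is linearly independent, and let z, z_1,…,z_M ∈ ℝ^d. If the number of indices j ∈ {1,…,J} for which there exists m ∈ {1,…,M} with ⟨w_j, z⟩ = ⟨w_j, z_m⟩ is at least (d−1)·M + 1, then z ∈ {z_1,…,z_M}. -/

import Mathlib

/-- If the vectors `w_1, …, w_J ∈ ℝ^d` are such that every `d` of them are linearly
independent and the number of indices `j` for which `⟨w_j, z⟩ = ⟨w_j, z_m⟩` for some `m`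
is at least `(d−1)·M + 1`, then `z ∈ {z_1, …, z_M}`. -/
theorem identification_general (d M J : ℕ) (hd : 1 ≤ d) (hM : 1 ≤ M)
    (w : Fin J → EuclideanSpace ℝ (Fin d))
    (hw : ∀ T : Finset (Fin J), T.card = d →
      LinearIndependent ℝ (fun j : T => w j.1))
    (z : EuclideanSpace ℝ (Fin d)) (zs : Fin M → EuclideanSpace ℝ (Fin d))
    (h : (d - 1) * M + 1 ≤
      {j : Fin J | ∃ m, (inner ℝ (w j) z : ℝ) = (inner ℝ (w j) (zs m) : ℝ)}.ncard) :
    ∃ m, z = zs m := by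
  classical
  set S : Set (Fin J) := {j : Fin J | ∃ m, (inner ℝ (w j) z : ℝ) = (inner ℝ (w j) (zs m) : ℝ)}
  have hS : S.ncard = S.toFinset.card := Set.ncard_eq_toFinset_card' S
  set s : Finset (Fin J) := S.toFinset with hs
  -- choice function
  have hsel : ∀ j ∈ s, ∃ m, (inner ℝ (w j) z : ℝ) = (inner ℝ (w j) (zs m) : ℝ) := by
    intro j hj
    rw [hs, Set.mem_toFinset] at hj
    exact hj
  set f : Fin J → Fin M := fun j =>
    if hj : ∃ m, (inner ℝ (w j) z : ℝ) = (inner ℝ (w j) (zs m) : ℝ) then hj.choose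
    else ⟨0, hM⟩ with hf
  have hfspec : ∀ j ∈ s, (inner ℝ (w j) z : ℝ) = (inner ℝ (w j) (zs (f j)) : ℝ) := by
    intro j hj
    have hj' := hsel j hj
    simp only [hf, dif_pos hj']
    exact hj'.choose_spec
  -- pigeonhole
  have hcard : (Finset.univ : Finset (Fin M)).card * (d - 1) < s.card := by
    simpa [hS, mul_comm] using h
  obtain ⟨m, -, hm⟩ := Finset.exists_lt_card_fiber_of_mul_lt_card_of_maps_to
    (fun j _ => Finset.mem_univ (f j)) hcard
  have hdm : d ≤ (s.filter (fun j => f j = m)).card := by omega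
  obtain ⟨T, hTsub, hTcard⟩ := Finset.exists_subset_card_eq hdm
  have hli := hw T hTcard
  -- z - zs m orthogonal to all w j, j ∈ T
  have horth : ∀ j ∈ T, (inner ℝ (w j) (z - zs m) : ℝ) = 0 := by
    intro j hj
    have hj' := hTsub hj
    rw [Finset.mem_filter] at hj'
    have := hfspec j hj'.1
    rw [hj'.2] at this
    rw [inner_sub_right, this, sub_self]
  -- span of w over T is everything
  have hcardT : Fintype.card T = Module.finrank ℝ (EuclideanSpace ℝ (Fin d)) := by
    simp [hTcard, finrank_euclideanSpace]
  have hTne : T.Nonempty := Finset.card_pos.mp (by omega)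
  haveI : Nonempty {x // x ∈ T} := ⟨⟨hTne.choose, hTne.choose_spec⟩⟩
  have hspan := hli.span_eq_top_of_card_eq_finrank hcardT
  have key : ∀ v : EuclideanSpace ℝ (Fin d),
      v ∈ Submodule.span ℝ (Set.range (fun j : T => w j.1)) →
      (inner ℝ v (z - zs m) : ℝ) = 0 := by
    intro v hv
    induction hv using Submodule.span_induction with
    | mem x hx =>
        obtain ⟨j, rfl⟩ := hx
        exact horth j.1 j.2
    | zero => simp
    | add x y _ _ hx hy => rw [inner_add_left, hx, hy, add_zero]
    | smul c x _ hx => rw [inner_smul_left, hx, mul_zero]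
  have hz : (inner ℝ (z - zs m) (z - zs m) : ℝ) = 0 := by
    apply key
    rw [hspan]; trivial
  have : z - zs m = 0 := by
    exact inner_self_eq_zero.mp hz
  exact ⟨m, sub_eq_zero.mp this⟩
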